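/- arXiv:1807.08130 — 2 statements merged into one kernel-verified Lean document; each statement's English description precedes it below -/
import Mathlib

section
/- For every (s,x,w) ∈ 𝒟 with (√2/2)(s − w) < min{w, x, T − s}, one has −(c + λ(w))·V̄(s,x,w) + p − N₁ + λ(w)·∫₀ˣ V̄(s, x−u, 0) dG(u) ≤ p − N₁ < 0. -/
open MeasureTheory

/-- The open domain `𝒟 = {(s,x,w) : 0 < s < T, x > 0, 0 < w < s}`. -/
def Dint (T : ℝ) : Set (ℝ × ℝ × ℝ) :=
  {q | 0 < q.1 ∧ q.1 < T ∧ 0 < q.2.1 ∧ 0 < q.2.2 ∧ q.2.2 < q.1}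

/-- The distance-like function `d(s,x,w) = min{T - s, w, (√2/2)(s-w), x}`. -/
noncomputable def dD (T s x w : ℝ) : ℝ :=
  min (T - s) (min w (min (Real.sqrt 2 / 2 * (s - w)) x))

/-- The supersolution candidate `V̄(s,x,w) = x + d(s,x,w) + N₁(T-s)`,
`N₁ = √2/2 + 1 + 2p`. -/
noncomputable def Vbar (T p s x w : ℝ) : ℝ :=
  x + dD T s x w + (Real.sqrt 2 / 2 + 1 + 2 * p) * (T - s)

/-- For every `(s,x,w) ∈ 𝒟` with `(√2/2)(s-w) < min{w, x, T-s}`, one has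
`-(c+λ(w))·V̄(s,x,w) + p - N₁ + λ(w)·∫₀ˣ V̄(s,x-u,0) dG(u) ≤ p - N₁ < 0`. -/
theorem stmt7 (T c p Λ : ℝ) (hT : 0 < T) (hc : 0 < c) (hp : 0 < p) (hΛ : 0 < Λ)
    (lam : ℝ → ℝ) (hlamc : ContinuousOn lam (Set.Icc 0 T))
    (hlam : ∀ w ∈ Set.Icc (0 : ℝ) T, 0 < lam w ∧ lam w ≤ Λ)
    (G : StieltjesFunction ℝ) (hGc : Continuous G)
    (hGprob : IsProbabilityMeasure G.measure) (hGsupp : G.measure (Set.Iio 0) = 0)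
    (s x w : ℝ) (hmem : (s, x, w) ∈ Dint T)
    (hactive : Real.sqrt 2 / 2 * (s - w) < min w (min x (T - s))) :
    (-(c + lam w) * Vbar T p s x w + p - (Real.sqrt 2 / 2 + 1 + 2 * p) +
        lam w * ∫ u in Set.Icc (0 : ℝ) x, Vbar T p s (x - u) 0 ∂G.measure)
      ≤ p - (Real.sqrt 2 / 2 + 1 + 2 * p) ∧
    p - (Real.sqrt 2 / 2 + 1 + 2 * p) < 0 := by
  obtain ⟨hs0, hsT, hx0, hw0, hws⟩ := hmem
  simp only at hs0 hsT hx0 hw0 hws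
  have hsq : (0:ℝ) < Real.sqrt 2 := by positivity
  have hN1 : 0 < Real.sqrt 2 / 2 + 1 + 2 * p := by positivity
  constructor
  · have hlw := (hlam w ⟨hw0.le, (hws.trans hsT).le⟩).1
    set C := x + (Real.sqrt 2 / 2 + 1 + 2 * p) * (T - s) with hC
    have hTs : (0:ℝ) < T - s := by linarith
    have hC0 : 0 ≤ C := by rw [hC]; nlinarith [mul_pos hN1 hTs]
    have hV : C ≤ Vbar T p s x w := by
      have hd : 0 ≤ dD T s x w := by
        unfold dD
        exact le_min (by linarith) (le_min hw0.le (le_min (by nlinarith) hx0.le))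
      simp only [Vbar, hC]; linarith
    have hbound : ∀ u ∈ Set.Icc (0:ℝ) x,
        0 ≤ Vbar T p s (x - u) 0 ∧ Vbar T p s (x - u) 0 ≤ C := by
      intro u hu
      obtain ⟨hu0, hux⟩ := hu
      have hd1 : dD T s (x - u) 0 ≤ 0 := by
        unfold dD
        exact le_trans (min_le_right _ _) (min_le_left _ _)
      have hd2 : 0 ≤ dD T s (x - u) 0 := by
        unfold dD
        exact le_min (by linarith) (le_min le_rfl (le_min (by nlinarith) (by linarith)))
      constructor
      · simp only [Vbar]; nlinarith
      · simp only [Vbar, hC]; nlinarith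
    have hIC : (∫ u in Set.Icc (0:ℝ) x, Vbar T p s (x - u) 0 ∂G.measure) ≤ C := by
      have h1 : (∫ u in Set.Icc (0:ℝ) x, Vbar T p s (x - u) 0 ∂G.measure)
          ≤ ∫ _u in Set.Icc (0:ℝ) x, C ∂G.measure := by
        apply integral_mono_of_nonneg
        · filter_upwards [ae_restrict_mem measurableSet_Icc] with u hu
          exact (hbound u hu).1
        · exact integrableOn_const (measure_lt_top _ _).ne
        · filter_upwards [ae_restrict_mem measurableSet_Icc] with u hu
          exact (hbound u hu).2
      have h2 : (∫ _u in Set.Icc (0:ℝ) x, C ∂G.measure)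
          = (G.measure (Set.Icc 0 x)).toReal * C := by
        rw [integral_const, smul_eq_mul, measureReal_def, Measure.restrict_apply_univ]
      have h3 : (G.measure (Set.Icc 0 x)).toReal ≤ 1 := by
        have := ENNReal.toReal_mono (by simp) (prob_le_one (μ := G.measure)
          (s := Set.Icc 0 x))
        simpa using this
      have h4 : (G.measure (Set.Icc 0 x)).toReal * C ≤ C := by nlinarith [ENNReal.toReal_nonneg (a := G.measure (Set.Icc 0 x))]
      linarith [h1, h2 ▸ h1]
    have hV0 : 0 ≤ Vbar T p s x w := le_trans hC0 hV
    nlinarith [mul_le_mul_of_nonneg_left hIC hlw.le,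
      mul_le_mul_of_nonneg_left hV hlw.le, mul_nonneg hc.le hV0]
  · nlinarith [Real.sqrt_nonneg 2]
end

section
/- For every (s,x,w) ∈ 𝒟 with x < min{T − s, w, (√2/2)(s − w)}, one has −(c + λ(w))·V̲(s,x,w) + N₂ + 2p + λ(w)·∫₀ˣ V̲(s, x−u, 0) dG(u) ≥ −(c + λ(w))·2T/(2+√2) + N₂ + 2p > 0. -/
open MeasureTheory

/-- The subsolution candidate `V̲(s,x,w) = x + d(s,x,w) - N₂(T-s)`,
`N₂ = √2/2 + 1 + (c+Λ)·2T/(2+√2)`. -/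
noncomputable def Vlow (T c Λ s x w : ℝ) : ℝ :=
  x + dD T s x w - (Real.sqrt 2 / 2 + 1 + (c + Λ) * (2 * T) / (2 + Real.sqrt 2)) * (T - s)

set_option maxHeartbeats 1000000 in
/-- For every `(s,x,w) ∈ 𝒟` with `x < min{T-s, w, (√2/2)(s-w)}`, one has
`-(c+λ(w))·V̲(s,x,w) + N₂ + 2p + λ(w)·∫₀ˣ V̲(s,x-u,0) dG(u)
  ≥ -(c+λ(w))·2T/(2+√2) + N₂ + 2p > 0`. -/
theorem stmt8 (T c p Λ : ℝ) (hT : 0 < T) (hc : 0 < c) (hp : 0 < p) (hΛ : 0 < Λ)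
    (lam : ℝ → ℝ) (hlamc : ContinuousOn lam (Set.Icc 0 T))
    (hlam : ∀ w ∈ Set.Icc (0 : ℝ) T, 0 < lam w ∧ lam w ≤ Λ)
    (G : StieltjesFunction ℝ) (hGc : Continuous G)
    (hGprob : IsProbabilityMeasure G.measure) (hGsupp : G.measure (Set.Iio 0) = 0)
    (s x w : ℝ) (hmem : (s, x, w) ∈ Dint T)
    (hactive : x < min (T - s) (min w (Real.sqrt 2 / 2 * (s - w)))) :
    (-(c + lam w) * (2 * T) / (2 + Real.sqrt 2) +
        (Real.sqrt 2 / 2 + 1 + (c + Λ) * (2 * T) / (2 + Real.sqrt 2)) + 2 * p)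
      ≤ (-(c + lam w) * Vlow T c Λ s x w +
        (Real.sqrt 2 / 2 + 1 + (c + Λ) * (2 * T) / (2 + Real.sqrt 2)) + 2 * p +
        lam w * ∫ u in Set.Icc (0 : ℝ) x, Vlow T c Λ s (x - u) 0 ∂G.measure) ∧
    0 < (-(c + lam w) * (2 * T) / (2 + Real.sqrt 2) +
        (Real.sqrt 2 / 2 + 1 + (c + Λ) * (2 * T) / (2 + Real.sqrt 2)) + 2 * p) := by
  obtain ⟨hs0, hsT, hx0, hw0, hws⟩ := hmem
  rw [lt_min_iff, lt_min_iff] at hactive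
  obtain ⟨hx1, hx2, hx3⟩ := hactive
  have hs2 : (0:ℝ) < Real.sqrt 2 := by positivity
  have h2 : Real.sqrt 2 * Real.sqrt 2 = 2 := Real.mul_self_sqrt (by norm_num)
  have hA : (0:ℝ) < 2 + Real.sqrt 2 := by linarith
  -- lam w bounds
  have hlamw := hlam w ⟨hw0.le, (hws.trans hsT).le⟩
  obtain ⟨hlw0, hlwΛ⟩ := hlamw
  -- abbreviations
  set N : ℝ := Real.sqrt 2 / 2 + 1 + (c + Λ) * (2 * T) / (2 + Real.sqrt 2) with hNdef
  set r : ℝ := 2 * T / (2 + Real.sqrt 2) with hrdef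
  have hr0 : 0 ≤ r := by
    rw [hrdef]; positivity
  have hN0 : 0 ≤ N := by
    have h3 : 0 ≤ (c + Λ) * (2 * T) / (2 + Real.sqrt 2) :=
      div_nonneg (by nlinarith) hA.le
    rw [hNdef]; linarith
  -- key bound : x (2+√2) ≤ T, hence 2x ≤ r
  have hkey : x * (2 + Real.sqrt 2) ≤ T := by
    nlinarith [mul_lt_mul_of_pos_left hx3 hs2]
  have hxr : 2 * x ≤ r := by
    rw [hrdef, le_div_iff₀ hA]; nlinarith
  -- d(s,x,w) = x on the active region
  have hdD : dD T s x w = x := by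
    unfold dD
    rw [min_eq_right hx3.le, min_eq_right hx2.le, min_eq_right hx1.le]
  have hV : Vlow T c Λ s x w = 2 * x - N * (T - s) := by
    unfold Vlow; rw [hdD, ← hNdef]; ring
  -- integrand identification
  have hVeq : ∀ u ∈ Set.Icc (0:ℝ) x, Vlow T c Λ s (x - u) 0 = (x - u) - N * (T - s) := by
    intro u hu
    unfold Vlow dD
    have h1 : (0:ℝ) ≤ min (Real.sqrt 2 / 2 * (s - 0)) (x - u) :=
      le_min (mul_nonneg (by positivity) (by linarith)) (by linarith [hu.2])
    rw [min_eq_left h1, min_eq_right (by linarith : (0:ℝ) ≤ T - s), ← hNdef]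
    ring
  -- the integral bound
  set I : ℝ := ∫ u in Set.Icc (0 : ℝ) x, Vlow T c Λ s (x - u) 0 ∂G.measure with hIdef
  have hIeq : I = ∫ u in Set.Icc (0 : ℝ) x, ((x - u) - N * (T - s)) ∂G.measure := by
    rw [hIdef]
    exact setIntegral_congr_fun measurableSet_Icc hVeq
  have hint : IntegrableOn (fun u : ℝ => (x - u) - N * (T - s)) (Set.Icc 0 x) G.measure := by
    apply ContinuousOn.integrableOn_compact isCompact_Icc
    fun_prop
  have hIlb : -(N * (T - s)) ≤ I := by
    rw [hIeq]
    have hconst : -(N * (T - s)) * (G.measure (Set.Icc 0 x)).toReal ≤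
        ∫ u in Set.Icc (0 : ℝ) x, ((x - u) - N * (T - s)) ∂G.measure := by
      refine le_of_eq_of_le ?_ (setIntegral_ge_of_const_le (c := -(N * (T - s))) measurableSet_Icc (measure_ne_top _ _) ?_ hint)
      · rw [smul_eq_mul, mul_comm]; rfl
      intro u hu
      have := hu.2
      nlinarith [hu.1, hu.2]
    have hm1 : (G.measure (Set.Icc 0 x)).toReal ≤ 1 := by
      have h := ENNReal.toReal_mono (ENNReal.one_ne_top) (prob_le_one (μ := G.measure)
        (s := Set.Icc 0 x))
      simpa using h
    have hK : 0 ≤ N * (T - s) := mul_nonneg hN0 (by linarith)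
    nlinarith
  constructor
  · -- main inequality
    rw [hV]
    have hdiv : -(c + lam w) * (2 * T) / (2 + Real.sqrt 2) = -((c + lam w) * r) := by
      rw [hrdef]; ring
    rw [hdiv]
    have p1 : 0 ≤ (c + lam w) * (r - 2 * x) :=
      mul_nonneg (by linarith) (by linarith)
    have p2 : 0 ≤ c * (N * (T - s)) :=
      mul_nonneg hc.le (mul_nonneg hN0 (by linarith))
    have p3 : 0 ≤ lam w * (I + N * (T - s)) :=
      mul_nonneg hlw0.le (by linarith)
    nlinarith [p1, p2, p3]
  · -- positivity
    have hdiv : -(c + lam w) * (2 * T) / (2 + Real.sqrt 2) = -((c + lam w) * r) := by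
      rw [hrdef]; ring
    have hNr : N = Real.sqrt 2 / 2 + 1 + (c + Λ) * r := by
      rw [hNdef, hrdef]; ring
    rw [hdiv, hNr]
    nlinarith [mul_nonneg (sub_nonneg.mpr hlwΛ) hr0, Real.sqrt_nonneg 2]
end
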